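/- Let U and V be two universal Turing machines. Then there exists a constant c' such that for every integer c ≥ 0 and every binary string x: if ld_{c,U}(x) ≥ |x| (the unscaled logical depth of x on U at significance c is at least the length of x), then ld^bb_{c+c',V}(x) ≤ ld^bb_{c,U}(x) + c'. -/

import Mathlib

/-- Bijective binary encoding of binary strings as natural numbers. -/
def strToNat : List Bool → ℕ
  | [] => 0
  | b :: t => (if b then 2 else 1) + 2 * strToNat t

/-- The partial result of running machine `M` on program `p` and auxiliary input `d`. -/
def evalS (M : Nat.Partrec.Code) (p d : List Bool) : Part ℕ :=
  M.eval (Nat.pair (strToNat p) (strToNat d))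

/-- `M(p, d) = x`. -/
def outputs (M : Nat.Partrec.Code) (p d x : List Bool) : Prop :=
  strToNat x ∈ evalS M p d

/-- `M` halts on program `p` (with empty auxiliary input). -/
def haltsOn (M : Nat.Partrec.Code) (p : List Bool) : Prop :=
  (evalS M p []).Dom

/-- The number of computation steps taken by `M` on program `p` (with empty auxiliary
input); meaningful only when `M` halts on `p`. -/
noncomputable def halttime (M : Nat.Partrec.Code) (p : List Bool) : ℕ :=
  sInf {t | (Nat.Partrec.Code.evaln t M (Nat.pair (strToNat p) 0)).isSome}

/-- `M` is a universal machine: it simulates every machine `V` via a prefix `w_V`. -/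
def Universal (M : Nat.Partrec.Code) : Prop :=
  ∀ V : Nat.Partrec.Code, ∃ w : List Bool, ∀ p y : List Bool,
    (evalS V p y).Dom → evalS M (w ++ p) y = evalS V p y

/-- Plain Kolmogorov complexity `C(x)` on machine `M`. -/
noncomputable def Cpx (M : Nat.Partrec.Code) (x : List Bool) : ℕ :=
  sInf {n | ∃ p : List Bool, p.length = n ∧ outputs M p [] x}

/-- Sophistication of `x` at (integer) significance level `c`. -/
noncomputable def soph (M : Nat.Partrec.Code) (c : ℤ) (x : List Bool) : ℕ :=
  sInf {n | ∃ p : List Bool, p.length = n ∧ (∀ d : List Bool, (evalS M p d).Dom) ∧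
    ∃ d : List Bool, outputs M p d x ∧ (p.length + d.length : ℤ) ≤ (Cpx M x : ℤ) + c}

/-- Logical depth of `x` at significance level `c`. -/
noncomputable def ld (M : Nat.Partrec.Code) (c : ℕ) (x : List Bool) : ℕ :=
  sInf {t | ∃ p : List Bool, p.length ≤ Cpx M x + c ∧ outputs M p [] x ∧ halttime M p = t}

/-- The inverse Busy Beaver function `bb(n)`. -/
noncomputable def bbInv (M : Nat.Partrec.Code) (n : ℕ) : ℕ :=
  sInf {k | ∃ p : List Bool, p.length = k ∧ haltsOn M p ∧ n ≤ halttime M p}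

/-- Busy Beaver logical depth of `x` at significance `c`. -/
noncomputable def ldbb (M : Nat.Partrec.Code) (c : ℕ) (x : List Bool) : ℕ :=
  bbInv M (ld M c x)

/-- The Busy Beaver function `BB(l)`. -/
noncomputable def BB (M : Nat.Partrec.Code) (l : ℕ) : ℕ :=
  sSup {t | ∃ p : List Bool, p.length ≤ l ∧ haltsOn M p ∧ halttime M p = t}

/-- Canonical encoding of a finite set of binary strings: the code of the sorted list
of the codes of its elements. -/
def setCode (S : Finset (List Bool)) : ℕ :=
  Encodable.encode ((S.image strToNat).sort (· ≤ ·))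

/-- Kolmogorov complexity `C(S)` of a finite set of binary strings on machine `M`. -/
noncomputable def CSet (M : Nat.Partrec.Code) (S : Finset (List Bool)) : ℕ :=
  sInf {n | ∃ p : List Bool, p.length = n ∧ setCode S ∈ evalS M p []}

/-- Conditional Kolmogorov complexity `C(x | m)` where the condition is a natural number. -/
noncomputable def CpxCondN (M : Nat.Partrec.Code) (x : List Bool) (m : ℕ) : ℕ :=
  sInf {n | ∃ p : List Bool, p.length = n ∧ strToNat x ∈ M.eval (Nat.pair (strToNat p) m)}

open Nat.Partrec Code

lemma strToNat_append (w p : List Bool) :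
    strToNat (w ++ p) = strToNat w + 2 ^ w.length * strToNat p := by
  induction w with
  | nil => simp [strToNat]
  | cons b t ih => simp [strToNat, ih, pow_succ]; ring

lemma strToNat_surj : ∀ n : ℕ, ∃ s : List Bool, strToNat s = n := by
  intro n
  induction n using Nat.strong_induction_on with
  | _ n ih =>
    match n with
    | 0 => exact ⟨[], rfl⟩
    | (m+1) =>
      rcases Nat.even_or_odd (m+1) with he | ho
      · obtain ⟨k, hk⟩ := he
        have hk' : k - 1 < m + 1 := by omega
        obtain ⟨s, hs⟩ := ih (k-1) hk'
        exact ⟨true :: s, by simp [strToNat, hs]; omega⟩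
      · obtain ⟨k, hk⟩ := ho
        obtain ⟨s, hs⟩ := ih k (by omega)
        exact ⟨false :: s, by simp [strToNat, hs]; omega⟩

lemma nat_pair_zero (b : ℕ) : Nat.pair b 0 = b * b + b := by
  simp [Nat.pair]

lemma pair_le_sq (a b : ℕ) : Nat.pair a b ≤ (a + b + 1)^2 := by
  rcases le_or_gt b a with h | h
  · rw [Nat.pair, if_neg (by omega)]; nlinarith
  · rw [Nat.pair, if_pos h]; nlinarith

lemma rfind'_out_le (cf : Code) : ∀ k n m, evaln k (cf.rfind') n = some m → m ≤ k + 1 := by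
  intro k
  induction k with
  | zero => intro n m h; simp [evaln] at h
  | succ k ih =>
    intro n m h
    simp [evaln, Option.bind_eq_some_iff, Seq.seq] at h
    obtain ⟨hn, x, hx, hout⟩ := h
    by_cases x0 : x = 0
    · simp [x0] at hout
      have : n.unpair.2 ≤ n := Nat.unpair_right_le n
      omega
    · simp [x0] at hout
      have := ih _ _ hout
      omega

lemma evaln_out_bound (c : Code) :
    ∃ E : ℕ, 1 ≤ E ∧ ∀ k n m, evaln k c n = some m → m ≤ (k + 2) ^ E := by
  induction c with
  | zero =>
    refine ⟨1, le_refl _, ?_⟩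
    rintro (_|k) n m h <;> simp [evaln, Option.bind_eq_some_iff] at h
    rw [pow_one]; omega
  | succ =>
    refine ⟨1, le_refl _, ?_⟩
    rintro (_|k) n m h <;> simp [evaln, Option.bind_eq_some_iff] at h
    rw [pow_one]; omega
  | left =>
    refine ⟨1, le_refl _, ?_⟩
    rintro (_|k) n m h <;> simp [evaln, Option.bind_eq_some_iff] at h
    obtain ⟨hn, rfl⟩ := h
    have := Nat.unpair_left_le n
    rw [pow_one]; omega
  | right =>
    refine ⟨1, le_refl _, ?_⟩
    rintro (_|k) n m h <;> simp [evaln, Option.bind_eq_some_iff] at h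
    obtain ⟨hn, rfl⟩ := h
    have := Nat.unpair_right_le n
    rw [pow_one]; omega
  | pair cf cg hf hg =>
    obtain ⟨Ef, hEf1, hf⟩ := hf
    obtain ⟨Eg, hEg1, hg⟩ := hg
    refine ⟨2 * (Ef + Eg + 1), by omega, ?_⟩
    rintro (_|k) n m h <;> simp [evaln, Option.bind_eq_some_iff, Seq.seq] at h
    obtain ⟨hn, y, hy, z, hz, rfl⟩ := h
    have h1 := hf _ _ _ hy
    have h2 := hg _ _ _ hz
    have base : (3:ℕ) ≤ k + 1 + 2 := by omega
    calc Nat.pair y z ≤ (y + z + 1)^2 := pair_le_sq y z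
      _ ≤ ((k+1+2)^(Ef+Eg+1))^2 := by
          apply Nat.pow_le_pow_left
          have e1 : (k+1+2)^Ef ≤ (k+1+2)^(Ef+Eg) := Nat.pow_le_pow_right (by omega) (by omega)
          have e2 : (k+1+2)^Eg ≤ (k+1+2)^(Ef+Eg) := Nat.pow_le_pow_right (by omega) (by omega)
          have e3 : (1:ℕ) ≤ (k+1+2)^(Ef+Eg) := Nat.one_le_pow _ _ (by omega)
          have e4 : 3 * (k+1+2)^(Ef+Eg) ≤ (k+1+2)^(Ef+Eg+1) := by
            rw [pow_succ]
            nlinarith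
          omega
      _ = (k+1+2)^(2*(Ef+Eg+1)) := by rw [← pow_mul, Nat.mul_comm]
  | comp cf cg hf hg =>
    obtain ⟨Ef, hEf1, hf⟩ := hf
    refine ⟨Ef, hEf1, ?_⟩
    rintro (_|k) n m h <;> simp [evaln, Option.bind_eq_some_iff] at h
    obtain ⟨hn, y, hy, hm⟩ := h
    exact hf _ _ _ hm
  | prec cf cg hf hg =>
    obtain ⟨Ef, hEf1, hf⟩ := hf
    obtain ⟨Eg, hEg1, hg⟩ := hg
    refine ⟨Ef + Eg, by omega, ?_⟩
    rintro (_|k) n m h <;> simp [evaln, Option.bind_eq_some_iff] at h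
    obtain ⟨hn, h⟩ := h
    have e1 : (k+1+2)^Ef ≤ (k+1+2)^(Ef+Eg) := Nat.pow_le_pow_right (by omega) (by omega)
    have e2 : (k+1+2)^Eg ≤ (k+1+2)^(Ef+Eg) := Nat.pow_le_pow_right (by omega) (by omega)
    rcases hn2 : n.unpair.2 with _ | y
    · rw [hn2] at h
      simp at h
      have := hf _ _ _ h
      omega
    · rw [hn2] at h
      simp [Option.bind_eq_some_iff] at h
      obtain ⟨i, hi, hm⟩ := h
      have := hg _ _ _ hm
      omega
  | rfind' cf hf =>
    refine ⟨1, le_refl _, ?_⟩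
    intro k n m h
    have := rfind'_out_le cf k n m h
    rw [pow_one]; omega

def condB (U V : Code) (A B : ℕ) (a : ℕ × ℕ) (b : ℕ) : Bool :=
  bif (evaln a.1 U (Nat.pair b 0)).isSome then (evaln a.2 V (Nat.pair (A + B * b) 0)).isSome
  else true

def Gb (U V : Code) (A B : ℕ) (a : ℕ × ℕ) : Bool :=
  (List.range a.1).foldr (fun b s => condB U V A B a (b, s).1 && (b, s).2) true

lemma foldr_and_eq_true (f : ℕ → Bool) :
    ∀ l : List ℕ, (l.foldr (fun b s => f b && s) true = true ↔ ∀ b ∈ l, f b = true) := by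
  intro l; induction l with
  | nil => simp
  | cons a t ih => simp [ih]

lemma Gb_eq_true {U V : Code} {A B T K : ℕ} :
    Gb U V A B (T, K) = true ↔
      ∀ b < T, (evaln T U (Nat.pair b 0)).isSome = true →
        (evaln K V (Nat.pair (A + B * b) 0)).isSome = true := by
  unfold Gb
  rw [foldr_and_eq_true (fun b => condB U V A B (T, K) b)]
  constructor
  · intro h b hb hsome
    have := h b (List.mem_range.2 hb)
    unfold condB at this
    simp only [hsome] at this
    simpa using this
  · intro h b hb
    unfold condB
    rcases hsome : (evaln T U (Nat.pair b 0)).isSome with _ | _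
    · simp
    · simpa using h b (List.mem_range.1 hb) hsome

lemma condB_prim (U V : Code) (A B : ℕ) : Primrec₂ (condB U V A B) := by
  have h1 : Primrec fun x : (ℕ × ℕ) × ℕ => (evaln x.1.1 U (Nat.pair x.2 0)).isSome :=
    Primrec.option_isSome.comp <| primrec_evaln.comp <|
      ((Primrec.fst.comp Primrec.fst).pair (Primrec.const U)).pair
        (Primrec₂.natPair.comp Primrec.snd (Primrec.const 0))
  have h2 : Primrec fun x : (ℕ × ℕ) × ℕ => (evaln x.1.2 V (Nat.pair (A + B * x.2) 0)).isSome :=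
    Primrec.option_isSome.comp <| primrec_evaln.comp <|
      ((Primrec.snd.comp Primrec.fst).pair (Primrec.const V)).pair
        (Primrec₂.natPair.comp
          (Primrec.nat_add.comp (Primrec.const A)
            (Primrec.nat_mul.comp (Primrec.const B) Primrec.snd))
          (Primrec.const 0))
  exact (Primrec.cond h1 h2 (Primrec.const true)).to₂

lemma Gb_prim (U V : Code) (A B : ℕ) : Primrec (Gb U V A B) := by
  have hand : Primrec₂ fun (a : ℕ × ℕ) (p : ℕ × Bool) => condB U V A B a p.1 && p.2 := by
    have := Primrec.cond ((condB_prim U V A B).comp Primrec.fst (Primrec.fst.comp Primrec.snd))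
      (Primrec.snd.comp (Primrec.snd (α := ℕ × ℕ) (β := ℕ × Bool))) (Primrec.const false)
    refine this.to₂.of_eq ?_
    intro a p
    cases condB U V A B a p.1 <;> simp
  exact Primrec.list_foldr (Primrec.list_range.comp Primrec.fst) (Primrec.const true) hand

def Ffun (U V : Code) (A B E : ℕ) : ℕ →. ℕ := fun a =>
  (Nat.rfind fun k => Part.some ((evaln k U a).isSome)).bind fun T =>
    (Nat.rfind fun K => Part.some (Gb U V A B (T, K))).map fun M => (M + 2) ^ E

lemma powPrim (E : ℕ) : Primrec fun m : ℕ => (m + 2) ^ E := by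
  induction E with
  | zero => simpa using Primrec.const 1
  | succ E ih =>
    have h2 : Primrec fun m : ℕ => m + 2 := Primrec.succ.comp Primrec.succ
    have := Primrec.nat_mul.comp ih h2
    refine this.of_eq fun m => ?_
    rw [pow_succ]

lemma Ffun_partrec (U V : Code) (A B E : ℕ) : Partrec (Ffun U V A B E) := by
  have hc1 : Computable₂ fun (a k : ℕ) => (evaln k U a).isSome :=
    (Primrec.option_isSome.comp <| primrec_evaln.comp <|
      ((Primrec.snd.pair (Primrec.const U)).pair Primrec.fst)).to₂.to_comp
  have h1 : Partrec fun a : ℕ => Nat.rfind fun k => Part.some ((evaln k U a).isSome) := by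
    have := Partrec.rfind hc1.partrec₂
    exact this
  have hG : Computable₂ fun T K : ℕ => Gb U V A B (T, K) := ((Gb_prim U V A B).to_comp).to₂
  have h2 : Partrec fun T : ℕ =>
      (Nat.rfind fun K => Part.some (Gb U V A B (T, K))).map fun M => (M + 2) ^ E := by
    refine (Partrec.rfind hG.partrec₂).map ?_
    exact ((powPrim E).to_comp.comp Computable.snd).to₂
  exact h1.bind ((h2.comp Computable.snd).to₂)

lemma mem_rfind_total {f : ℕ → Bool} {n : ℕ} (h1 : f n = true) (h2 : ∀ m < n, f m = false) :
    n ∈ Nat.rfind fun k => Part.some (f k) :=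
  Nat.mem_rfind.2 ⟨by simp [h1], fun {m} hm => by simp [h2 m hm]⟩

lemma rfind_dom_total {f : ℕ → Bool} {n : ℕ} (h : f n = true) :
    (Nat.rfind fun k => Part.some (f k)).Dom :=
  Nat.rfind_dom.2 ⟨n, by simp [h], fun {_} _ => trivial⟩

lemma mem_Ffun {U V : Code} {A B E a T M : ℕ}
    (hT : T ∈ Nat.rfind fun k => Part.some ((evaln k U a).isSome))
    (hM : M ∈ Nat.rfind fun K => Part.some (Gb U V A B (T, K))) :
    ((M + 2) ^ E : ℕ) ∈ Ffun U V A B E a := by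
  refine Part.mem_bind_iff.2 ⟨T, hT, ?_⟩
  exact (Part.mem_map_iff _).2 ⟨M, hM, rfl⟩

lemma exists_fuel (P : ℕ → Prop) (g : ℕ → ℕ → Bool)
    (mono : ∀ b K K', K ≤ K' → g K b = true → g K' b = true) :
    ∀ T, (∀ b, b < T → P b → ∃ K, g K b = true) →
      ∃ K, ∀ b, b < T → P b → g K b = true := by
  intro T
  induction T with
  | zero => exact fun _ => ⟨0, by omega⟩
  | succ T ih =>
    intro h
    obtain ⟨K1, hK1⟩ := ih fun b hb => h b (Nat.lt_succ_of_lt hb)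
    by_cases hP : P T
    · obtain ⟨K2, hK2⟩ := h T (Nat.lt_succ_self T) hP
      refine ⟨max K1 K2, fun b hb hPb => ?_⟩
      rcases Nat.lt_succ_iff_lt_or_eq.1 hb with hb' | rfl
      · exact mono _ _ _ (le_max_left _ _) (hK1 b hb' hPb)
      · exact mono _ _ _ (le_max_right _ _) hK2
    · refine ⟨K1, fun b hb hPb => ?_⟩
      rcases Nat.lt_succ_iff_lt_or_eq.1 hb with hb' | rfl
      · exact hK1 b hb' hPb
      · exact absurd hPb hP

section Helpers

lemma strToNat_nil : strToNat [] = 0 := rfl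

lemma evalS_nil (M : Code) (p : List Bool) :
    evalS M p [] = M.eval (Nat.pair (strToNat p) 0) := rfl

lemma halt_set_nonempty {M : Code} {p : List Bool} (h : haltsOn M p) :
    {t | (evaln t M (Nat.pair (strToNat p) 0)).isSome}.Nonempty := by
  obtain ⟨m, hm⟩ := Part.dom_iff_mem.1 h
  rw [evalS_nil] at hm
  obtain ⟨k, hk⟩ := evaln_complete.1 hm
  exact ⟨k, Option.isSome_iff_exists.2 ⟨m, hk⟩⟩

lemma evaln_isSome_halttime {M : Code} {p : List Bool} (h : haltsOn M p) :
    (evaln (halttime M p) M (Nat.pair (strToNat p) 0)).isSome :=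
  Nat.sInf_mem (halt_set_nonempty h)

lemma lt_halttime_none {M : Code} {p : List Bool} {k : ℕ} (hk : k < halttime M p) :
    (evaln k M (Nat.pair (strToNat p) 0)).isSome = false := by
  have := Nat.notMem_of_lt_sInf hk
  simpa [Set.mem_setOf_eq] using this

lemma isSome_mono {k k' : ℕ} {c : Code} {n : ℕ} (h : k ≤ k')
    (hs : (evaln k c n).isSome = true) : (evaln k' c n).isSome = true := by
  obtain ⟨m, hm⟩ := Option.isSome_iff_exists.1 hs
  exact Option.isSome_iff_exists.2 ⟨m, evaln_mono h hm⟩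

lemma input_lt_halttime {M : Code} {p : List Bool} (h : haltsOn M p) :
    Nat.pair (strToNat p) 0 < halttime M p := by
  obtain ⟨m, hm⟩ := Option.isSome_iff_exists.1 (evaln_isSome_halttime h)
  exact evaln_bound (Option.mem_def.2 hm)

lemma Cpx_witness {U : Code} (hU : Universal U) (x : List Bool) :
    ∃ p : List Bool, p.length = Cpx U x ∧ outputs U p [] x := by
  obtain ⟨w, hw⟩ := hU (Code.const (strToNat x))
  have hdom : (evalS (Code.const (strToNat x)) [] []).Dom := by
    rw [evalS_nil, eval_const]; trivial
  have hout : outputs U w [] x := by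
    unfold outputs
    have := hw [] [] hdom
    rw [List.append_nil] at this
    rw [this, evalS_nil, eval_const]
    exact Part.mem_some _
  have hne : {n | ∃ p : List Bool, p.length = n ∧ outputs U p [] x}.Nonempty :=
    ⟨w.length, w, rfl, hout⟩
  have := Nat.sInf_mem hne
  obtain ⟨p, hp1, hp2⟩ := this
  exact ⟨p, hp1, hp2⟩

end Helpers


theorem ldbb_is_invariant :
    ∀ U V : Nat.Partrec.Code, Universal U → Universal V →
    ∃ c' : ℕ, ∀ c : ℕ, ∀ x : List Bool, x.length ≤ ld U c x →
      ldbb V (c + c') x ≤ ldbb U c x + c' := by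
  intro U V hU hV
  obtain ⟨w1, hw1⟩ := hV U
  obtain ⟨w2, hw2⟩ := hU V
  obtain ⟨E, hE1, hEbound⟩ := evaln_out_bound V
  set A := strToNat w1 with hA
  set B := 2 ^ w1.length with hB
  obtain ⟨cW, hcW⟩ := exists_code.1 (Partrec.nat_iff.1 (Ffun_partrec U V A B E))
  obtain ⟨wS, hwS⟩ := hV cW
  refine ⟨w1.length + w2.length + wS.length, ?_⟩
  intro c x _hx
  obtain ⟨pU, hpUlen, hpUout⟩ := Cpx_witness hU x
  obtain ⟨pV, hpVlen, hpVout⟩ := Cpx_witness hV x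
  -- C_U(x) ≤ |w2| + C_V(x)
  have hCU_le : Cpx U x ≤ w2.length + Cpx V x := by
    have hdom : (evalS V pV []).Dom := Part.dom_iff_mem.2 ⟨_, hpVout⟩
    have hout : outputs U (w2 ++ pV) [] x := by
      unfold outputs; rw [hw2 pV [] hdom]; exact hpVout
    have hle : Cpx U x ≤ (w2 ++ pV).length :=
      Nat.sInf_le ⟨w2 ++ pV, rfl, hout⟩
    simpa [List.length_append, hpVlen] using hle
  -- the ld witness p on U
  have hldU_ne : {t | ∃ p : List Bool, p.length ≤ Cpx U x + c ∧ outputs U p [] x ∧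
      halttime U p = t}.Nonempty :=
    ⟨halttime U pU, pU, by omega, hpUout, rfl⟩
  have hld_mem := Nat.sInf_mem hldU_ne
  obtain ⟨p, hplen, hpout, hpht⟩ := hld_mem
  have hpht' : halttime U p = ld U c x := hpht
  have hphalts : haltsOn U p := Part.dom_iff_mem.2 ⟨_, hpout⟩
  -- the bbInv witness q on U
  have hbbU_ne : {k | ∃ r : List Bool, r.length = k ∧ haltsOn U r ∧
      ld U c x ≤ halttime U r}.Nonempty :=
    ⟨p.length, p, rfl, hphalts, by rw [hpht']⟩
  have hbb_mem := Nat.sInf_mem hbbU_ne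
  obtain ⟨q, hqlen, hqhalts, hqT⟩ := hbb_mem
  set Tq := halttime U q with hTq
  set a := Nat.pair (strToNat q) 0 with ha
  have hTmem : Tq ∈ Nat.rfind fun k => Part.some ((evaln k U a).isSome) :=
    mem_rfind_total (evaln_isSome_halttime hqhalts) (fun m hm => lt_halttime_none hm)
  -- uniform fuel for the second search
  have hper : ∀ b, b < Tq → (evaln Tq U (Nat.pair b 0)).isSome = true →
      ∃ K, (evaln K V (Nat.pair (A + B * b) 0)).isSome = true := by
    intro b _ hsome
    obtain ⟨s, rfl⟩ := strToNat_surj b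
    obtain ⟨m, hm⟩ := Option.isSome_iff_exists.1 hsome
    have hmem : m ∈ eval U (Nat.pair (strToNat s) 0) := evaln_sound (Option.mem_def.2 hm)
    have hdom : (evalS U s []).Dom := by
      rw [evalS_nil]; exact Part.dom_iff_mem.2 ⟨m, hmem⟩
    have hsim := hw1 s [] hdom
    have hdomV : (evalS V (w1 ++ s) []).Dom := by rw [hsim]; exact hdom
    obtain ⟨m', hm'⟩ := Part.dom_iff_mem.1 hdomV
    rw [evalS_nil] at hm'
    obtain ⟨K, hK⟩ := evaln_complete.1 hm'
    refine ⟨K, ?_⟩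
    have happ : strToNat (w1 ++ s) = A + B * strToNat s := strToNat_append w1 s
    rw [← happ]
    exact Option.isSome_iff_exists.2 ⟨m', hK⟩
  obtain ⟨K0, hK0⟩ := exists_fuel (fun b => (evaln Tq U (Nat.pair b 0)).isSome = true)
    (fun K b => (evaln K V (Nat.pair (A + B * b) 0)).isSome)
    (fun b K K' h hs => isSome_mono h hs) Tq hper
  have hGdom : (Nat.rfind fun K => Part.some (Gb U V A B (Tq, K))).Dom :=
    rfind_dom_total (n := K0) (Gb_eq_true.2 hK0)
  set M := (Nat.rfind fun K => Part.some (Gb U V A B (Tq, K))).get hGdom with hM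
  have hMmem : M ∈ Nat.rfind fun K => Part.some (Gb U V A B (Tq, K)) := Part.get_mem hGdom
  have hGM : Gb U V A B (Tq, M) = true := by
    have := Nat.rfind_spec hMmem
    exact (Part.mem_some_iff.1 this).symm
  have hFval : ((M + 2) ^ E : ℕ) ∈ Ffun U V A B E a := mem_Ffun hTmem hMmem
  -- halttime V (w1 ++ p) ≤ M
  have hp_lt : strToNat p < Tq := by
    have h1 := input_lt_halttime hphalts
    have h2 := Nat.left_le_pair (strToNat p) 0
    rw [hpht'] at h1
    omega
  have hp_some : (evaln Tq U (Nat.pair (strToNat p) 0)).isSome = true := by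
    refine isSome_mono ?_ (evaln_isSome_halttime hphalts)
    rw [hpht']; exact hqT
  have hVp_le : halttime V (w1 ++ p) ≤ M := by
    have hsome := Gb_eq_true.1 hGM (strToNat p) hp_lt hp_some
    refine Nat.sInf_le ?_
    show (evaln M V (Nat.pair (strToNat (w1 ++ p)) 0)).isSome
    rw [strToNat_append]
    exact hsome
  -- w1 ++ p is admissible for V at significance c + c'
  have hdomUp : (evalS U p []).Dom := hphalts
  have hsimp := hw1 p [] hdomUp
  have houtV : outputs V (w1 ++ p) [] x := by
    unfold outputs; rw [hsimp]; exact hpout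
  have hlenV : (w1 ++ p).length ≤ Cpx V x + (c + (w1.length + w2.length + wS.length)) := by
    rw [List.length_append]
    omega
  have hnV_le : ld V (c + (w1.length + w2.length + wS.length)) x ≤ halttime V (w1 ++ p) :=
    Nat.sInf_le ⟨w1 ++ p, hlenV, houtV, rfl⟩
  -- the program wS ++ q on V
  have hcWdom : (evalS cW q []).Dom := by
    rw [evalS_nil, hcW]
    exact Part.dom_iff_mem.2 ⟨_, hFval⟩
  have hrsim := hwS q [] hcWdom
  have hrval : ((M + 2) ^ E : ℕ) ∈ evalS V (wS ++ q) [] := by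
    rw [hrsim, evalS_nil, hcW]
    exact hFval
  have hrhalts : haltsOn V (wS ++ q) := Part.dom_iff_mem.2 ⟨_, hrval⟩
  set τ := halttime V (wS ++ q) with hτdef
  have hMτ : M ≤ τ := by
    obtain ⟨m', hm'⟩ := Option.isSome_iff_exists.1 (evaln_isSome_halttime hrhalts)
    have hm'' : m' ∈ eval V (Nat.pair (strToNat (wS ++ q)) 0) :=
      evaln_sound (Option.mem_def.2 hm')
    have heq : m' = (M + 2) ^ E := by
      refine Part.mem_unique hm'' ?_
      rw [evalS_nil] at hrval
      exact hrval
    have hb := hEbound τ _ m' hm'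
    rw [heq] at hb
    have : M + 2 ≤ τ + 2 := (Nat.pow_le_pow_iff_left (by omega)).1 (le_trans hb (le_refl _))
    omega
  -- conclude
  have hfinal : bbInv V (ld V (c + (w1.length + w2.length + wS.length)) x) ≤ (wS ++ q).length := by
    refine Nat.sInf_le ⟨wS ++ q, rfl, hrhalts, ?_⟩
    calc ld V (c + (w1.length + w2.length + wS.length)) x
        ≤ halttime V (w1 ++ p) := hnV_le
      _ ≤ M := hVp_le
      _ ≤ τ := hMτ
  have hqlen' : q.length = bbInv U (ld U c x) := hqlen
  show bbInv V (ld V (c + (w1.length + w2.length + wS.length)) x) ≤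
      bbInv U (ld U c x) + (w1.length + w2.length + wS.length)
  rw [List.length_append] at hfinal
  omega
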